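/- Fix a finite set 𝒴 with K := |𝒴| ≥ 2 elements, reals γ ∈ (0, 1/K], a positive integer n, and a noise function w : 𝒴 → ℝ. Define the clipping function f_γ(x) := max(γ, min(1, x)). Let p̂, p̂' : 𝒴 → ℝ be two functions such that there exist distinct ℓ, ℓ' ∈ 𝒴 with p̂(ℓ) = p̂'(ℓ) + 1/n, p̂(ℓ') = p̂'(ℓ') − 1/n, and p̂(y) = p̂'(y) for all y ∉ {ℓ, ℓ'}. Define q(y) := f_γ(p̂(y) + w(y)) and q'(y) := f_γ(p̂'(y) + w(y)) for each y ∈ 𝒴, and Δ := 1 − Σ_y q(y), Δ' := 1 − Σ_y q'(y). Define ζ_y := q(y) − γ if Σ_y q(y) > 1 and ζ_y := 1 − q(y) otherwise, and set q̃(y) := q(y) + (ζ_y / Σ_{y'} ζ_{y'}) · Δ; define q̃'(y) analogously from q' and Δ'. Then for every y ∈ 𝒴, |q̃(y) − q̃'(y)| ≤ 2/n. -/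

import Mathlib

open Finset

private lemma frac_lemma (a a' b b' c ε : ℝ) (ha : 0 ≤ a) (ha' : 0 ≤ a')
    (hb : 0 ≤ b) (hb' : 0 ≤ b') (hc : 0 ≤ c) (hcS' : c ≤ a' + b')
    (hS : 0 < a + b) (hS' : 0 < a' + b')
    (hε : |a - a'| + |b - b'| ≤ ε) :
    |c * a / (a + b) - c * a' / (a' + b')| ≤ ε := by
  have key : c * a / (a + b) - c * a' / (a' + b') =
      c * (a * (b' - b) + b * (a - a')) / ((a + b) * (a' + b')) := by
    field_simp
    ring
  rw [key, abs_div, abs_of_pos (mul_pos hS hS'), div_le_iff₀ (mul_pos hS hS')]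
  have h1 : |c * (a * (b' - b) + b * (a - a'))| ≤ c * a * |b - b'| + c * b * |a - a'| := by
    rw [abs_sub_comm b b']
    calc |c * (a * (b' - b) + b * (a - a'))| = c * |a * (b' - b) + b * (a - a')| := by
          rw [abs_mul, abs_of_nonneg hc]
      _ ≤ c * (|a * (b' - b)| + |b * (a - a')|) := by
          gcongr
          exact abs_add_le _ _
      _ = c * a * |b' - b| + c * b * |a - a'| := by
          rw [abs_mul, abs_mul, abs_of_nonneg ha, abs_of_nonneg hb]; ring
  have h2 : c * a ≤ (a + b) * (a' + b') := by nlinarith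
  have h3 : c * b ≤ (a + b) * (a' + b') := by nlinarith
  nlinarith [abs_nonneg (a - a'), abs_nonneg (b - b'),
    mul_le_mul_of_nonneg_right h2 (abs_nonneg (b - b')),
    mul_le_mul_of_nonneg_right h3 (abs_nonneg (a - a')),
    mul_le_mul_of_nonneg_left hε (le_of_lt (mul_pos hS hS'))]

private lemma same_hi {Y : Type*} [Fintype Y] [DecidableEq Y]
    (γ ε : ℝ) (q q' qt qt' : Y → ℝ) (y : Y)
    (hKγ : (Fintype.card Y : ℝ) * γ ≤ 1)
    (hqγ : ∀ z, γ ≤ q z) (hq'γ : ∀ z, γ ≤ q' z)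
    (hSq : 1 < ∑ z, q z) (hSq' : 1 < ∑ z, q' z)
    (hsum : ∑ z, |q z - q' z| ≤ ε)
    (hqty : qt y = q y + ((q y - γ) / (∑ z, q z - (Fintype.card Y : ℝ) * γ)) * (1 - ∑ z, q z))
    (hqt'y : qt' y = q' y + ((q' y - γ) / (∑ z, q' z - (Fintype.card Y : ℝ) * γ)) * (1 - ∑ z, q' z)) :
    |qt y - qt' y| ≤ ε := by
  set K : ℝ := (Fintype.card Y : ℝ) with hKdef
  set a := q y - γ with hadef
  set a' := q' y - γ with ha'def
  set b := ∑ z ∈ univ.erase y, (q z - γ) with hbdef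
  set b' := ∑ z ∈ univ.erase y, (q' z - γ) with hb'def
  have hab : a + b = ∑ z, q z - K * γ := by
    rw [hadef, hbdef, Finset.add_sum_erase _ (fun z => q z - γ) (mem_univ y),
      Finset.sum_sub_distrib]
    simp [card_univ, mul_comm, hKdef]
  have hab' : a' + b' = ∑ z, q' z - K * γ := by
    rw [ha'def, hb'def, Finset.add_sum_erase _ (fun z => q' z - γ) (mem_univ y),
      Finset.sum_sub_distrib]
    simp [card_univ, mul_comm, hKdef]
  have hS : 0 < a + b := by rw [hab]; linarith
  have hS' : 0 < a' + b' := by rw [hab']; linarith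
  have hqy : q y = a + γ := by rw [hadef]; ring
  have hq'y : q' y = a' + γ := by rw [ha'def]; ring
  have hSqe : ∑ z, q z = a + b + K * γ := by linarith
  have hSq'e : ∑ z, q' z = a' + b' + K * γ := by linarith
  have key : qt y - qt' y = (1 - K * γ) * a / (a + b) - (1 - K * γ) * a' / (a' + b') := by
    rw [hqty, hqt'y, hSqe, hSq'e, hqy, hq'y]
    simp only [add_sub_cancel_right]
    field_simp
    ring
  rw [key]
  apply frac_lemma
  · linarith [hqγ y]
  · linarith [hq'γ y]
  · exact Finset.sum_nonneg fun z _ => by linarith [hqγ z]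
  · exact Finset.sum_nonneg fun z _ => by linarith [hq'γ z]
  · linarith
  · rw [hab']; linarith
  · exact hS
  · exact hS'
  · have e1 : a - a' = q y - q' y := by rw [hadef, ha'def]; ring
    have e2 : b - b' = ∑ z ∈ univ.erase y, (q z - q' z) := by
      rw [hbdef, hb'def, ← Finset.sum_sub_distrib]
      exact Finset.sum_congr rfl fun z _ => by ring
    calc |a - a'| + |b - b'| ≤ |q y - q' y| + ∑ z ∈ univ.erase y, |q z - q' z| := by
          rw [e1, e2]
          gcongr
          exact Finset.abs_sum_le_sum_abs _ _
      _ = ∑ z, |q z - q' z| := Finset.add_sum_erase _ (fun z => |q z - q' z|) (mem_univ y)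
      _ ≤ ε := hsum

private lemma same_lo {Y : Type*} [Fintype Y] [DecidableEq Y]
    (γ ε : ℝ) (q q' qt qt' : Y → ℝ) (y : Y)
    (hK2 : (2 : ℝ) ≤ (Fintype.card Y : ℝ))
    (hq1 : ∀ z, q z ≤ 1) (hq'1 : ∀ z, q' z ≤ 1)
    (hSq : ∑ z, q z ≤ 1) (hSq' : ∑ z, q' z ≤ 1)
    (hsum : ∑ z, |q z - q' z| ≤ ε)
    (hqty : qt y = q y + ((1 - q y) / ((Fintype.card Y : ℝ) - ∑ z, q z)) * (1 - ∑ z, q z))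
    (hqt'y : qt' y = q' y + ((1 - q' y) / ((Fintype.card Y : ℝ) - ∑ z, q' z)) * (1 - ∑ z, q' z)) :
    |qt y - qt' y| ≤ ε := by
  set K : ℝ := (Fintype.card Y : ℝ) with hKdef
  set a := 1 - q y with hadef
  set a' := 1 - q' y with ha'def
  set b := ∑ z ∈ univ.erase y, (1 - q z) with hbdef
  set b' := ∑ z ∈ univ.erase y, (1 - q' z) with hb'def
  have hab : a + b = K - ∑ z, q z := by
    rw [hadef, hbdef, Finset.add_sum_erase _ (fun z => 1 - q z) (mem_univ y),
      Finset.sum_sub_distrib]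
    simp [card_univ, hKdef]
  have hab' : a' + b' = K - ∑ z, q' z := by
    rw [ha'def, hb'def, Finset.add_sum_erase _ (fun z => 1 - q' z) (mem_univ y),
      Finset.sum_sub_distrib]
    simp [card_univ, hKdef]
  have hS : 0 < a + b := by rw [hab]; linarith
  have hS' : 0 < a' + b' := by rw [hab']; linarith
  have hqy : q y = 1 - a := by rw [hadef]; ring
  have hq'y : q' y = 1 - a' := by rw [ha'def]; ring
  have hSqe : ∑ z, q z = K - (a + b) := by linarith
  have hSq'e : ∑ z, q' z = K - (a' + b') := by linarith
  have key : qt y - qt' y = (K - 1) * a' / (a' + b') - (K - 1) * a / (a + b) := by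
    rw [hqty, hqt'y, hSqe, hSq'e, hqy, hq'y]
    simp only [sub_sub_cancel]
    field_simp
    ring
  rw [key, abs_sub_comm]
  apply frac_lemma
  · linarith [hq1 y]
  · linarith [hq'1 y]
  · exact Finset.sum_nonneg fun z _ => by linarith [hq1 z]
  · exact Finset.sum_nonneg fun z _ => by linarith [hq'1 z]
  · linarith
  · rw [hab']; linarith
  · exact hS
  · exact hS'
  · have e1 : a - a' = q' y - q y := by rw [hadef, ha'def]; ring
    have e2 : b - b' = ∑ z ∈ univ.erase y, (q' z - q z) := by
      rw [hbdef, hb'def, ← Finset.sum_sub_distrib]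
      exact Finset.sum_congr rfl fun z _ => by ring
    calc |a - a'| + |b - b'| ≤ |q' y - q y| + ∑ z ∈ univ.erase y, |q' z - q z| := by
          rw [e1, e2]
          gcongr
          exact Finset.abs_sum_le_sum_abs _ _
      _ = ∑ z, |q' z - q z| := Finset.add_sum_erase _ (fun z => |q' z - q z|) (mem_univ y)
      _ ≤ ε := by simpa [abs_sub_comm] using hsum

private lemma mixed_lemma {Y : Type*} [Fintype Y] [DecidableEq Y]
    (γ ε : ℝ) (q q' qt qt' : Y → ℝ) (y : Y)
    (hK2 : (2 : ℝ) ≤ (Fintype.card Y : ℝ))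
    (hKγ : (Fintype.card Y : ℝ) * γ ≤ 1)
    (hqγ : ∀ z, γ ≤ q z) (hq'1 : ∀ z, q' z ≤ 1)
    (hSq : 1 < ∑ z, q z) (hSq' : ∑ z, q' z ≤ 1)
    (hsum : ∑ z, |q z - q' z| ≤ ε)
    (hqty : qt y = q y + ((q y - γ) / (∑ z, q z - (Fintype.card Y : ℝ) * γ)) * (1 - ∑ z, q z))
    (hqt'y : qt' y = q' y + ((1 - q' y) / ((Fintype.card Y : ℝ) - ∑ z, q' z)) * (1 - ∑ z, q' z)) :
    |qt y - qt' y| ≤ ε := by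
  set K : ℝ := (Fintype.card Y : ℝ) with hKdef
  set Sq := ∑ z, q z with hSqdef
  set Sq' := ∑ z, q' z with hSq'def
  have hS : 0 < Sq - K * γ := by linarith
  have hT' : 0 < K - Sq' := by linarith
  have ha : 0 ≤ q y - γ := by linarith [hqγ y]
  have ha' : 0 ≤ 1 - q' y := by linarith [hq'1 y]
  -- a ≤ S
  have haS : q y - γ ≤ Sq - K * γ := by
    have h := Finset.add_sum_erase _ (fun z => q z - γ) (mem_univ y)
    have hb : (0:ℝ) ≤ ∑ z ∈ univ.erase y, (q z - γ) :=
      Finset.sum_nonneg fun z _ => by linarith [hqγ z]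
    have hss : ∑ z, (q z - γ) = Sq - K * γ := by
      rw [Finset.sum_sub_distrib]; simp [card_univ, mul_comm, hSqdef, hKdef]
    simp only [hss] at h
    linarith
  have ha'T' : 1 - q' y ≤ K - Sq' := by
    have h := Finset.add_sum_erase _ (fun z => 1 - q' z) (mem_univ y)
    have hb : (0:ℝ) ≤ ∑ z ∈ univ.erase y, (1 - q' z) :=
      Finset.sum_nonneg fun z _ => by linarith [hq'1 z]
    have hss : ∑ z, (1 - q' z) = K - Sq' := by
      rw [Finset.sum_sub_distrib]; simp [card_univ, hSq'def, hKdef]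
    simp only [hss] at h
    linarith
  have d1nn : 0 ≤ ((q y - γ) / (Sq - K * γ)) * (Sq - 1) :=
    mul_nonneg (div_nonneg ha hS.le) (by linarith)
  have d1le : ((q y - γ) / (Sq - K * γ)) * (Sq - 1) ≤ Sq - 1 := by
    rw [div_mul_eq_mul_div, div_le_iff₀ hS]
    nlinarith
  have d2nn : 0 ≤ ((1 - q' y) / (K - Sq')) * (1 - Sq') :=
    mul_nonneg (div_nonneg ha' hT'.le) (by linarith)
  have d2le : ((1 - q' y) / (K - Sq')) * (1 - Sq') ≤ 1 - Sq' := by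
    rw [div_mul_eq_mul_div, div_le_iff₀ hT']
    nlinarith
  have he : q y - q' y ≤ ε := by
    calc q y - q' y ≤ |q y - q' y| := le_abs_self _
      _ ≤ ∑ z, |q z - q' z| :=
        Finset.single_le_sum (f := fun z => |q z - q' z|) (fun z _ => abs_nonneg _) (mem_univ y)
      _ ≤ ε := hsum
  have he2 : (Sq - Sq') - (q y - q' y) ≤ ε := by
    have h := Finset.add_sum_erase _ (fun z => q z - q' z) (mem_univ y)
    have hss : ∑ z, (q z - q' z) = Sq - Sq' := by rw [Finset.sum_sub_distrib]
    simp only [hss] at h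
    have hb : ∑ z ∈ univ.erase y, (q z - q' z) ≤ ∑ z ∈ univ.erase y, |q z - q' z| :=
      Finset.sum_le_sum fun z _ => le_abs_self _
    have hb2 : ∑ z ∈ univ.erase y, |q z - q' z| ≤ ∑ z, |q z - q' z| :=
      Finset.sum_le_sum_of_subset_of_nonneg (Finset.subset_univ _)
        (fun z _ _ => abs_nonneg _)
    linarith
  have hqty2 : qt y = q y - ((q y - γ) / (Sq - K * γ)) * (Sq - 1) := by
    rw [hqty]; ring
  have hqt'y2 : qt' y = q' y + ((1 - q' y) / (K - Sq')) * (1 - Sq') := hqt'y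
  rw [abs_sub_le_iff]
  constructor <;> rw [hqty2, hqt'y2] <;> linarith

private lemma clip_lip (γ x y : ℝ) :
    |max γ (min 1 x) - max γ (min 1 y)| ≤ |x - y| := by
  rcases abs_cases (x - y) with ⟨h1, h2⟩ | ⟨h1, h2⟩ <;>
  · simp only [max_def, min_def]
    split_ifs <;> rw [abs_le] <;> constructor <;> linarith

/-- Stability of the noisy, truncated, renormalized empirical label distribution of the
Cluster-DP mechanism under changing one of the `n` labels:
`|q̃(y) − q̃'(y)| ≤ 2/n` for all labels `y`. -/
theorem cluster_dp_qtilde_stability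
    {Y : Type*} [Fintype Y] [DecidableEq Y]
    (hK : 2 ≤ Fintype.card Y)
    (γ : ℝ) (hγpos : 0 < γ) (hγle : γ ≤ 1 / (Fintype.card Y : ℝ))
    (n : ℕ) (hn : 0 < n)
    (w phat phat' : Y → ℝ)
    (ℓ ℓ' : Y) (hne : ℓ ≠ ℓ')
    (h1 : phat ℓ = phat' ℓ + 1 / (n : ℝ))
    (h2 : phat ℓ' = phat' ℓ' - 1 / (n : ℝ))
    (h3 : ∀ y, y ≠ ℓ → y ≠ ℓ' → phat y = phat' y)
    (q q' : Y → ℝ)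
    (hq : ∀ y, q y = max γ (min 1 (phat y + w y)))
    (hq' : ∀ y, q' y = max γ (min 1 (phat' y + w y)))
    (Δ Δ' : ℝ)
    (hΔ : Δ = 1 - ∑ y, q y) (hΔ' : Δ' = 1 - ∑ y, q' y)
    (ζ ζ' : Y → ℝ)
    (hζ : ∀ y, ζ y = if 1 < ∑ z, q z then q y - γ else 1 - q y)
    (hζ' : ∀ y, ζ' y = if 1 < ∑ z, q' z then q' y - γ else 1 - q' y)
    (qt qt' : Y → ℝ)
    (hqt : ∀ y, qt y = q y + (ζ y / ∑ z, ζ z) * Δ)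
    (hqt' : ∀ y, qt' y = q' y + (ζ' y / ∑ z, ζ' z) * Δ') :
    ∀ y, |qt y - qt' y| ≤ 2 / (n : ℝ) := by
  intro y
  have hK2 : (2 : ℝ) ≤ (Fintype.card Y : ℝ) := by exact_mod_cast hK
  have hKpos : (0 : ℝ) < (Fintype.card Y : ℝ) := by linarith
  have hKγ : (Fintype.card Y : ℝ) * γ ≤ 1 := by
    have := (le_div_iff₀ hKpos).mp hγle
    linarith
  have hγ1 : γ ≤ 1 := by
    have h1K : 1 / (Fintype.card Y : ℝ) ≤ 1 := by
      rw [div_le_one hKpos]; linarith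
    linarith
  have hqγ : ∀ z, γ ≤ q z := fun z => by rw [hq z]; exact le_max_left _ _
  have hq'γ : ∀ z, γ ≤ q' z := fun z => by rw [hq' z]; exact le_max_left _ _
  have hq1 : ∀ z, q z ≤ 1 := fun z => by rw [hq z]; exact max_le hγ1 (min_le_left _ _)
  have hq'1 : ∀ z, q' z ≤ 1 := fun z => by rw [hq' z]; exact max_le hγ1 (min_le_left _ _)
  have hn' : (0 : ℝ) < (n : ℝ) := by exact_mod_cast hn
  have hsum : ∑ z, |q z - q' z| ≤ 2 / (n : ℝ) := by
    have hpair : ∑ z, |q z - q' z| = ∑ z ∈ ({ℓ, ℓ'} : Finset Y), |q z - q' z| := by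
      symm
      apply Finset.sum_subset (Finset.subset_univ _)
      intro z _ hz
      simp only [Finset.mem_insert, Finset.mem_singleton, not_or] at hz
      rw [hq z, hq' z, h3 z hz.1 hz.2, sub_self, abs_zero]
    have hl : |q ℓ - q' ℓ| ≤ 1 / (n : ℝ) := by
      rw [hq ℓ, hq' ℓ]
      calc |max γ (min 1 (phat ℓ + w ℓ)) - max γ (min 1 (phat' ℓ + w ℓ))|
          ≤ |phat ℓ + w ℓ - (phat' ℓ + w ℓ)| := clip_lip _ _ _
        _ = 1 / (n : ℝ) := by
            rw [show phat ℓ + w ℓ - (phat' ℓ + w ℓ) = 1 / (n : ℝ) by rw [h1]; ring]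
            exact abs_of_pos (by positivity)
    have hl' : |q ℓ' - q' ℓ'| ≤ 1 / (n : ℝ) := by
      rw [hq ℓ', hq' ℓ']
      calc |max γ (min 1 (phat ℓ' + w ℓ')) - max γ (min 1 (phat' ℓ' + w ℓ'))|
          ≤ |phat ℓ' + w ℓ' - (phat' ℓ' + w ℓ')| := clip_lip _ _ _
        _ = 1 / (n : ℝ) := by
            rw [show phat ℓ' + w ℓ' - (phat' ℓ' + w ℓ') = -(1 / (n : ℝ)) by rw [h2]; ring]
            rw [abs_neg]
            exact abs_of_pos (by positivity)
    rw [hpair, Finset.sum_pair hne]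
    have : (2:ℝ) / (n:ℝ) = 1 / (n:ℝ) + 1 / (n:ℝ) := by ring
    rw [this]
    exact add_le_add hl hl'
  have hsum' : ∑ z, |q' z - q z| ≤ 2 / (n : ℝ) := by
    simpa [abs_sub_comm] using hsum
  by_cases hc : 1 < ∑ z, q z <;> by_cases hc' : 1 < ∑ z, q' z
  · -- both high
    have hζeq : ∀ z, ζ z = q z - γ := fun z => by rw [hζ z, if_pos hc]
    have hSζ : ∑ z, ζ z = ∑ z, q z - (Fintype.card Y : ℝ) * γ := by
      rw [Finset.sum_congr rfl fun z _ => hζeq z, Finset.sum_sub_distrib]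
      simp [Finset.card_univ, mul_comm]
    have hqty : qt y = q y + ((q y - γ) / (∑ z, q z - (Fintype.card Y : ℝ) * γ)) * (1 - ∑ z, q z) := by
      rw [hqt y, hΔ, hζeq y, hSζ]
    have hζ'eq : ∀ z, ζ' z = q' z - γ := fun z => by rw [hζ' z, if_pos hc']
    have hSζ' : ∑ z, ζ' z = ∑ z, q' z - (Fintype.card Y : ℝ) * γ := by
      rw [Finset.sum_congr rfl fun z _ => hζ'eq z, Finset.sum_sub_distrib]
      simp [Finset.card_univ, mul_comm]
    have hqt'y : qt' y = q' y + ((q' y - γ) / (∑ z, q' z - (Fintype.card Y : ℝ) * γ)) * (1 - ∑ z, q' z) := by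
      rw [hqt' y, hΔ', hζ'eq y, hSζ']
    exact same_hi γ (2 / (n : ℝ)) q q' qt qt' y hKγ hqγ hq'γ hc hc' hsum hqty hqt'y
  · -- q high, q' low (mixed)
    have hζeq : ∀ z, ζ z = q z - γ := fun z => by rw [hζ z, if_pos hc]
    have hSζ : ∑ z, ζ z = ∑ z, q z - (Fintype.card Y : ℝ) * γ := by
      rw [Finset.sum_congr rfl fun z _ => hζeq z, Finset.sum_sub_distrib]
      simp [Finset.card_univ, mul_comm]
    have hqty : qt y = q y + ((q y - γ) / (∑ z, q z - (Fintype.card Y : ℝ) * γ)) * (1 - ∑ z, q z) := by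
      rw [hqt y, hΔ, hζeq y, hSζ]
    have hζ'eq : ∀ z, ζ' z = 1 - q' z := fun z => by rw [hζ' z, if_neg hc']
    have hSζ' : ∑ z, ζ' z = (Fintype.card Y : ℝ) - ∑ z, q' z := by
      rw [Finset.sum_congr rfl fun z _ => hζ'eq z, Finset.sum_sub_distrib]
      simp [Finset.card_univ]
    have hqt'y : qt' y = q' y + ((1 - q' y) / ((Fintype.card Y : ℝ) - ∑ z, q' z)) * (1 - ∑ z, q' z) := by
      rw [hqt' y, hΔ', hζ'eq y, hSζ']
    exact mixed_lemma γ (2 / (n : ℝ)) q q' qt qt' y hK2 hKγ hqγ hq'1 hc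
      (not_lt.mp hc') hsum hqty hqt'y
  · -- q low, q' high (mixed, swapped)
    have hζeq : ∀ z, ζ z = 1 - q z := fun z => by rw [hζ z, if_neg hc]
    have hSζ : ∑ z, ζ z = (Fintype.card Y : ℝ) - ∑ z, q z := by
      rw [Finset.sum_congr rfl fun z _ => hζeq z, Finset.sum_sub_distrib]
      simp [Finset.card_univ]
    have hqty : qt y = q y + ((1 - q y) / ((Fintype.card Y : ℝ) - ∑ z, q z)) * (1 - ∑ z, q z) := by
      rw [hqt y, hΔ, hζeq y, hSζ]
    have hζ'eq : ∀ z, ζ' z = q' z - γ := fun z => by rw [hζ' z, if_pos hc']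
    have hSζ' : ∑ z, ζ' z = ∑ z, q' z - (Fintype.card Y : ℝ) * γ := by
      rw [Finset.sum_congr rfl fun z _ => hζ'eq z, Finset.sum_sub_distrib]
      simp [Finset.card_univ, mul_comm]
    have hqt'y : qt' y = q' y + ((q' y - γ) / (∑ z, q' z - (Fintype.card Y : ℝ) * γ)) * (1 - ∑ z, q' z) := by
      rw [hqt' y, hΔ', hζ'eq y, hSζ']
    rw [abs_sub_comm]
    exact mixed_lemma γ (2 / (n : ℝ)) q' q qt' qt y hK2 hKγ hq'γ hq1 hc'
      (not_lt.mp hc) hsum' hqt'y hqty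
  · -- both low
    have hζeq : ∀ z, ζ z = 1 - q z := fun z => by rw [hζ z, if_neg hc]
    have hSζ : ∑ z, ζ z = (Fintype.card Y : ℝ) - ∑ z, q z := by
      rw [Finset.sum_congr rfl fun z _ => hζeq z, Finset.sum_sub_distrib]
      simp [Finset.card_univ]
    have hqty : qt y = q y + ((1 - q y) / ((Fintype.card Y : ℝ) - ∑ z, q z)) * (1 - ∑ z, q z) := by
      rw [hqt y, hΔ, hζeq y, hSζ]
    have hζ'eq : ∀ z, ζ' z = 1 - q' z := fun z => by rw [hζ' z, if_neg hc']
    have hSζ' : ∑ z, ζ' z = (Fintype.card Y : ℝ) - ∑ z, q' z := by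
      rw [Finset.sum_congr rfl fun z _ => hζ'eq z, Finset.sum_sub_distrib]
      simp [Finset.card_univ]
    have hqt'y : qt' y = q' y + ((1 - q' y) / ((Fintype.card Y : ℝ) - ∑ z, q' z)) * (1 - ∑ z, q' z) := by
      rw [hqt' y, hΔ', hζ'eq y, hSζ']
    exact same_lo γ (2 / (n : ℝ)) q q' qt qt' y hK2 hq1 hq'1 (not_lt.mp hc)
      (not_lt.mp hc') hsum hqty hqt'y
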